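/- (Blass) Let X be a set, K a type, and θ : X × 𝒫(X) → X ⊕ K an injection. For x ∈ X define T_x := { t : K | ∃ s ⊆ X, θ(x, s) = Sum.inr t }. Then the sets T_x are nonempty and pairwise disjoint: T_x ≠ ∅ for every x, and T_x ∩ T_y = ∅ whenever x ≠ y. -/
import Mathlib


universe u

/-- (Blass) Given an injection `θ : X × 𝒫(X) → X ⊕ K`, the sets
`T x := {t : K | ∃ s : Set X, θ (x, s) = Sum.inr t}` are nonempty and pairwise
disjoint. -/
theorem blass_T_nonempty_pairwise_disjoint (X K : Type u)
    (θ : X × Set X → X ⊕ K) (hθ : Function.Injective θ) :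
    (∀ x : X, {t : K | ∃ s : Set X, θ (x, s) = Sum.inr t} ≠ ∅) ∧
    (∀ x y : X, x ≠ y →
      {t : K | ∃ s : Set X, θ (x, s) = Sum.inr t} ∩
        {t : K | ∃ s : Set X, θ (y, s) = Sum.inr t} = ∅) := by
  constructor
  · intro x h
    -- if T x is empty, every θ (x, s) is of the form inl, giving an
    -- injection Set X → X, contradicting Cantor's theorem.
    have hinl : ∀ s : Set X, ∃ z : X, θ (x, s) = Sum.inl z := by
      intro s
      cases hs : θ (x, s) with
      | inl z => exact ⟨z, rfl⟩
      | inr t =>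
        exfalso
        have : t ∈ ({t : K | ∃ s : Set X, θ (x, s) = Sum.inr t} : Set K) :=
          ⟨s, hs⟩
        rw [h] at this
        exact this
    choose f hf using hinl
    have hfinj : Function.Injective f := by
      intro s s' hss
      have : θ (x, s) = θ (x, s') := by rw [hf s, hf s', hss]
      exact (Prod.mk.injEq .. ▸ hθ this).2
    exact Function.cantor_injective f hfinj
  · intro x y hxy
    ext t
    simp only [Set.mem_inter_iff, Set.mem_setOf_eq, Set.mem_empty_iff_false,
      iff_false, not_and]
    rintro ⟨s, hs⟩ ⟨s', hs'⟩
    apply hxy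
    have : θ (x, s) = θ (y, s') := by rw [hs, hs']
    exact (Prod.mk.injEq .. ▸ hθ this).1
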